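/- Let s and r be independent random variables, exponentially distributed with means Ω_S > 0 and Ω_R > 0 respectively, and let ρ > 0. Then E[1{r ≥ ρ·s}·log₂(1+r)] = (1/ln 2)·[ e^{1/Ω_R}·E₁(1/Ω_R) − (ρΩ_S/(Ω_R+ρΩ_S))·exp((Ω_R+ρΩ_S)/(ρ·Ω_S·Ω_R))·E₁((Ω_R+ρΩ_S)/(ρ·Ω_S·Ω_R)) ]. -/

import Mathlib

open MeasureTheory ProbabilityTheory Real Set Filter Topology

/-- The exponential integral function `E₁(x) = ∫_x^∞ e^{-t}/t dt`. -/
noncomputable def expIntE1 (x : ℝ) : ℝ := ∫ t in Set.Ioi x, Real.exp (-t) / t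

/-- The law of an exponentially distributed random variable with mean `Ω`:
the measure on `ℝ` with density `(1/Ω) e^{-x/Ω}` on `[0,∞)` with respect to
Lebesgue measure. -/
noncomputable def expLaw (Ω : ℝ) : Measure ℝ :=
  (volume.restrict (Set.Ici (0 : ℝ))).withDensity
    (fun x => ENNReal.ofReal ((1 / Ω) * Real.exp (-x / Ω)))

lemma integrableOn_exp_div_one_add {a : ℝ} (ha : 0 < a) :
    IntegrableOn (fun y => Real.exp (-(a * y)) / (1 + y)) (Ioi 0) := by
  apply ((exp_neg_integrableOn_Ioi 0 ha).mono' ?_ ?_)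
  · apply ContinuousOn.aestronglyMeasurable ?_ measurableSet_Ioi
    refine ContinuousOn.div (by fun_prop) (by fun_prop) ?_
    intro x hx
    have : (0:ℝ) < x := hx
    positivity
  · filter_upwards [ae_restrict_mem measurableSet_Ioi] with y hy
    have h1 : (1:ℝ) ≤ 1 + y := by linarith [mem_Ioi.mp hy]
    have h2 := (exp_pos (-(a*y))).le
    rw [norm_div, Real.norm_of_nonneg (exp_pos _).le, Real.norm_of_nonneg (by linarith), neg_mul]
    rw [div_le_iff₀ (by linarith)]
    nlinarith

lemma integral_exp_div_one_add {a : ℝ} (ha : 0 < a) :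
    ∫ y in Ioi (0:ℝ), Real.exp (-(a * y)) / (1 + y) = Real.exp a * expIntE1 a := by
  have key : ∀ y : ℝ, Real.exp (-(a * y)) / (1 + y)
      = Real.exp a * (a * (Real.exp (-(a * (y + 1))) / (a * (y + 1)))) := by
    intro y
    rcases eq_or_ne (1 + y) 0 with h | h
    · have h0 : y + 1 = 0 := by linarith
      rw [h, h0, mul_zero, div_zero, div_zero, mul_zero, mul_zero]
    · have hy1 : y + 1 ≠ 0 := fun hh => h (by linarith)
      have hexp : Real.exp (-(a * (y + 1))) = Real.exp (-(a * y)) * Real.exp (-a) := by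
        rw [← Real.exp_add]; ring_nf
      rw [hexp]
      field_simp [Real.exp_neg]
      have hE : Real.exp a * Real.exp (-a) = 1 := by rw [← Real.exp_add]; simp
      linear_combination (-(y+1)) * hE
  simp_rw [key]
  rw [MeasureTheory.integral_const_mul, MeasureTheory.integral_const_mul]
  have shift : (∫ y in Ioi (0:ℝ), Real.exp (-(a * (y + 1))) / (a * (y + 1)))
      = ∫ u in Ioi (1:ℝ), Real.exp (-(a * u)) / (a * u) := by
    rw [← integral_indicator measurableSet_Ioi, ← integral_indicator measurableSet_Ioi,
        ← integral_add_right_eq_self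
          (fun x => (Ioi (1:ℝ)).indicator (fun u => Real.exp (-(a * u)) / (a * u)) x) 1]
    congr 1; ext x
    by_cases hx : 0 < x
    · rw [indicator_of_mem (mem_Ioi.mpr hx), indicator_of_mem (by simp; linarith)]
    · rw [indicator_of_notMem (by simpa using hx), indicator_of_notMem (by simp; linarith)]
  rw [shift]
  have := integral_comp_mul_left_Ioi (fun t => Real.exp (-t) / t) 1 ha
  simp only [mul_one, smul_eq_mul] at this
  rw [this, ← expIntE1]
  field_simp

lemma tendsto_log_mul_exp {c : ℝ} (hc : 0 < c) :
    Tendsto (fun y => Real.log (1 + y) * Real.exp (-(c * y))) atTop (𝓝 0) := by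
  have hxy : Tendsto (fun y : ℝ => y * Real.exp (-(c * y))) atTop (𝓝 0) := by
    have h1 : Tendsto (fun x : ℝ => x ^ 1 * Real.exp (-x)) atTop (𝓝 0) :=
      tendsto_pow_mul_exp_neg_atTop_nhds_zero 1
    have h2 : Tendsto (fun y : ℝ => c * y) atTop atTop :=
      tendsto_id.const_mul_atTop hc
    have h3 := (h1.comp h2).const_mul c⁻¹
    rw [mul_zero] at h3
    apply h3.congr
    intro y
    simp only [Function.comp_apply, pow_one]
    field_simp
  apply squeeze_zero' (g := fun y => y * Real.exp (-(c * y))) ?_ ?_ hxy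
  · filter_upwards [eventually_ge_atTop (0:ℝ)] with y hy
    exact mul_nonneg (Real.log_nonneg (by linarith)) (exp_pos _).le
  · filter_upwards [eventually_ge_atTop (0:ℝ)] with y hy
    exact mul_le_mul_of_nonneg_right
      (by linarith [Real.log_le_sub_one_of_pos (show (0:ℝ) < 1 + y by linarith)])
      (exp_pos _).le

lemma continuousOn_log_mul_exp (a : ℝ) :
    ContinuousOn (fun y => Real.log (1 + y) * Real.exp (-(a * y))) (Ici 0) := by
  intro y hy
  have hy0 : (0:ℝ) ≤ y := hy
  have h1 : (1:ℝ) + y ≠ 0 := by positivity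
  exact (((Real.continuousAt_log h1).comp (by fun_prop)).mul (by fun_prop)).continuousWithinAt

lemma integrableOn_log_mul_exp {a : ℝ} (ha : 0 < a) :
    IntegrableOn (fun y => Real.log (1 + y) * Real.exp (-(a * y))) (Ioi 0) := by
  apply integrable_of_isBigO_exp_neg (half_pos ha) (continuousOn_log_mul_exp a)
  have ht : Tendsto (fun y => Real.log (1 + y) * Real.exp (-(a * y)) / Real.exp (-(a / 2) * y))
      atTop (𝓝 0) := by
    apply (tendsto_log_mul_exp (half_pos ha)).congr
    intro y
    rw [eq_div_iff (exp_ne_zero _), mul_assoc, ← Real.exp_add]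
    ring_nf
  exact ((Asymptotics.isLittleO_iff_tendsto'
    (Eventually.of_forall fun x h => absurd h (exp_ne_zero _))).mpr ht).isBigO

lemma integral_log_mul_exp {a : ℝ} (ha : 0 < a) :
    ∫ y in Ioi (0:ℝ), Real.log (1 + y) * Real.exp (-(a * y))
      = a⁻¹ * (Real.exp a * expIntE1 a) := by
  set f' : ℝ → ℝ := fun y =>
    Real.log (1 + y) * Real.exp (-(a * y)) - a⁻¹ * (Real.exp (-(a * y)) / (1 + y)) with hf'
  have hderiv : ∀ y ∈ Ici (0:ℝ),
      HasDerivAt (fun y => -a⁻¹ * (Real.log (1 + y) * Real.exp (-(a * y)))) (f' y) y := by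
    intro y hy
    have hy0 : (0:ℝ) ≤ y := hy
    have h1 : (1:ℝ) + y ≠ 0 := by positivity
    have hlog : HasDerivAt (fun y : ℝ => Real.log (1 + y)) (1 / (1 + y)) y := by
      have : HasDerivAt (fun y : ℝ => 1 + y) 1 y := (hasDerivAt_id y).const_add 1
      simpa using this.log h1
    have hexp : HasDerivAt (fun y : ℝ => Real.exp (-(a * y))) (Real.exp (-(a * y)) * -a) y := by
      have : HasDerivAt (fun y : ℝ => -(a * y)) (-a) y := by
        simpa using ((hasDerivAt_id y).const_mul a).fun_neg
      simpa using this.exp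
    have := ((hlog.fun_mul hexp).const_mul (-a⁻¹))
    convert this using 1
    rfl
    rfl
    rw [hf']
    field_simp
    ring
  have hint : IntegrableOn f' (Ioi 0) := by
    exact (integrableOn_log_mul_exp ha).sub ((integrableOn_exp_div_one_add ha).const_mul a⁻¹)
  have htend : Tendsto (fun y => -a⁻¹ * (Real.log (1 + y) * Real.exp (-(a * y)))) atTop (𝓝 0) := by
    have := (tendsto_log_mul_exp ha).const_mul (-a⁻¹)
    simpa using this
  have key := integral_Ioi_of_hasDerivAt_of_tendsto' hderiv hint htend
  simp only [Real.log_one, mul_zero, zero_mul, sub_zero, neg_mul, mul_comm] at key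
  have hsplit : ∫ y in Ioi (0:ℝ), f' y
      = (∫ y in Ioi (0:ℝ), Real.log (1 + y) * Real.exp (-(a * y)))
        - a⁻¹ * ∫ y in Ioi (0:ℝ), Real.exp (-(a * y)) / (1 + y) := by
    rw [hf', MeasureTheory.integral_sub (integrableOn_log_mul_exp ha)
      ((integrableOn_exp_div_one_add ha).const_mul a⁻¹), MeasureTheory.integral_const_mul]
  rw [hsplit, integral_exp_div_one_add ha] at key
  simp at key
  linarith [key]

lemma expLaw_eq_expMeasure (Ω : ℝ) : expLaw Ω = ProbabilityTheory.expMeasure (1 / Ω) := by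
  rw [expLaw, ProbabilityTheory.expMeasure, ProbabilityTheory.gammaMeasure,
    ← MeasureTheory.withDensity_indicator measurableSet_Ici]
  congr 1
  ext x
  rw [show ProbabilityTheory.gammaPDF 1 (1 / Ω) x
      = ProbabilityTheory.exponentialPDF (1 / Ω) x from rfl,
    ProbabilityTheory.exponentialPDF_eq]
  by_cases hx : 0 ≤ x
  · simp only [Set.indicator_apply, mem_Ici, hx, if_true]
    rw [show -x / Ω = -(1 / Ω * x) by ring]
  · simp [Set.indicator_apply, mem_Ici, hx]

lemma expLaw_isProbability {Ω : ℝ} (hΩ : 0 < Ω) : IsProbabilityMeasure (expLaw Ω) := by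
  rw [expLaw_eq_expMeasure]
  exact ProbabilityTheory.isProbabilityMeasure_expMeasure (by positivity)

lemma expLaw_ae_nonneg (Ω : ℝ) : ∀ᵐ y ∂(expLaw Ω), y ∈ Ici (0:ℝ) := by
  rw [expLaw]
  exact (ae_restrict_mem measurableSet_Ici).filter_mono
    (withDensity_absolutelyContinuous _ _).ae_le

lemma expLaw_Iic {Ω : ℝ} (hΩ : 0 < Ω) {c : ℝ} (hc : 0 ≤ c) :
    ((expLaw Ω) (Iic c)).toReal = 1 - Real.exp (-(c / Ω)) := by
  have hcont : Continuous (fun x : ℝ => (1 / Ω) * Real.exp (-x / Ω)) := by fun_prop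
  have hnn : ∀ x : ℝ, 0 ≤ (1 / Ω) * Real.exp (-x / Ω) := fun x => by positivity
  rw [expLaw, withDensity_apply _ measurableSet_Iic, Measure.restrict_restrict measurableSet_Iic,
    show Iic c ∩ Ici (0:ℝ) = Icc 0 c by rw [Set.inter_comm, Set.Ici_inter_Iic]]
  rw [← ofReal_integral_eq_lintegral_ofReal (hcont.integrableOn_Icc) (ae_of_all _ hnn)]
  have : ∫ x in Icc (0:ℝ) c, (1 / Ω) * Real.exp (-x / Ω)
      = ∫ x in (0:ℝ)..c, (1 / Ω) * Real.exp (-x / Ω) := by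
    rw [intervalIntegral.integral_of_le hc, integral_Icc_eq_integral_Ioc]
  rw [this]
  have hFTC : ∫ x in (0:ℝ)..c, (1 / Ω) * Real.exp (-x / Ω)
      = (fun x => -Real.exp (-x / Ω)) c - (fun x => -Real.exp (-x / Ω)) 0 := by
    apply intervalIntegral.integral_eq_sub_of_hasDerivAt
    · intro x _
      have h1 : HasDerivAt (fun x : ℝ => -x / Ω) (-(1 / Ω)) x := by
        simpa [neg_div] using ((hasDerivAt_id x).div_const Ω).fun_neg
      have := (h1.exp).fun_neg
      convert this using 1
      field_simp
    · exact (by fun_prop : Continuous fun x : ℝ => (1 / Ω) * Real.exp (-x / Ω)).intervalIntegrable 0 c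
  rw [hFTC]
  simp only [neg_div, zero_div, neg_zero, Real.exp_zero]
  have hle : Real.exp (-(c / Ω)) ≤ 1 :=
    Real.exp_le_one_iff.mpr (neg_nonpos.mpr (by positivity))
  rw [ENNReal.toReal_ofReal (by linarith)]
  ring_nf

lemma integral_expLaw {Ω : ℝ} (hΩ : 0 < Ω) (h : ℝ → ℝ) :
    ∫ y, h y ∂(expLaw Ω) = ∫ y in Ioi (0:ℝ), h y * ((1 / Ω) * Real.exp (-y / Ω)) := by
  have hm : Measurable fun x : ℝ => ((1 / Ω) * Real.exp (-x / Ω)).toNNReal :=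
    measurable_real_toNNReal.comp (by fun_prop)
  have hrepr : expLaw Ω = (volume.restrict (Ici 0)).withDensity
      (fun x => (((1 / Ω) * Real.exp (-x / Ω)).toNNReal : ENNReal)) := rfl
  rw [hrepr, integral_withDensity_eq_integral_smul hm, ← integral_Ici_eq_integral_Ioi]
  apply setIntegral_congr_fun measurableSet_Ici
  intro y _
  simp only [NNReal.smul_def]
  rw [Real.coe_toNNReal _ (by positivity : (0:ℝ) ≤ (1/Ω) * Real.exp (-y/Ω))]
  rw [smul_eq_mul]
  ring

lemma integrable_expLaw_iff {Ω : ℝ} (hΩ : 0 < Ω) {h : ℝ → ℝ} :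
    Integrable h (expLaw Ω)
      ↔ IntegrableOn (fun y => h y * ((1 / Ω) * Real.exp (-y / Ω))) (Ici 0) := by
  have heq : (fun x => h x * (ENNReal.ofReal ((1 / Ω) * Real.exp (-x / Ω))).toReal)
      = fun y => h y * ((1 / Ω) * Real.exp (-y / Ω)) := by
    ext x
    rw [ENNReal.toReal_ofReal (by positivity)]
  rw [expLaw, integrable_withDensity_iff
    (show Measurable fun x : ℝ => ENNReal.ofReal ((1 / Ω) * Real.exp (-x / Ω)) from
      ENNReal.measurable_ofReal.comp (by fun_prop))
    (ae_of_all _ fun x => ENNReal.ofReal_lt_top), heq]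
  exact Iff.rfl

/-- For independent exponential SNRs `s`, `r` with means `Ω_S`, `Ω_R` and
threshold `ρ > 0`, the throughput of buffer-aided relaying with adaptive link
selection and decision function `F(x) = x` is
`E[1{r ≥ ρs} log₂(1+r)] = (1/ln 2)[e^{1/Ω_R} E₁(1/Ω_R)
− (ρΩ_S/(Ω_R+ρΩ_S)) e^{(Ω_R+ρΩ_S)/(ρΩ_SΩ_R)} E₁((Ω_R+ρΩ_S)/(ρΩ_SΩ_R))]`
(equation (20) of the paper at `ρ = ρ_opt`). -/
theorem throughput_rayleigh
    {Ω : Type*} [MeasurableSpace Ω] (P : Measure Ω) [IsProbabilityMeasure P]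
    (s r : Ω → ℝ) (hs : Measurable s) (hr : Measurable r)
    (ΩS ΩR : ℝ) (hΩS : 0 < ΩS) (hΩR : 0 < ΩR)
    (hlaws : P.map s = expLaw ΩS) (hlawr : P.map r = expLaw ΩR)
    (hindep : IndepFun s r P) (ρ : ℝ) (hρ : 0 < ρ) :
    ∫ ω, (if ρ * s ω ≤ r ω then Real.logb 2 (1 + r ω) else 0) ∂P
      = (1 / Real.log 2)
          * (Real.exp (1 / ΩR) * expIntE1 (1 / ΩR)
              - (ρ * ΩS / (ΩR + ρ * ΩS))
                  * Real.exp ((ΩR + ρ * ΩS) / (ρ * ΩS * ΩR))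
                  * expIntE1 ((ΩR + ρ * ΩS) / (ρ * ΩS * ΩR))) := by
  haveI hPS : IsProbabilityMeasure (expLaw ΩS) := expLaw_isProbability hΩS
  haveI hPR : IsProbabilityMeasure (expLaw ΩR) := expLaw_isProbability hΩR
  have hlog2 : Real.log 2 ≠ 0 := (Real.log_pos (by norm_num)).ne'
  have ha1 : (0:ℝ) < ΩR⁻¹ := by positivity
  have ha2 : (0:ℝ) < ΩR⁻¹ + (ρ * ΩS)⁻¹ := by positivity
  set F : ℝ × ℝ → ℝ := fun p => if ρ * p.1 ≤ p.2 then Real.logb 2 (1 + p.2) else 0 with hF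
  have hlogbm : Measurable fun y : ℝ => Real.logb 2 (1 + y) := by
    simp only [Real.logb]
    exact (Real.measurable_log.comp (measurable_const.add measurable_id)).div_const _
  have hFmeas : Measurable F :=
    Measurable.ite (measurableSet_le (measurable_fst.const_mul ρ) measurable_snd)
      (hlogbm.comp measurable_snd) measurable_const
  have hmap : P.map (fun ω => (s ω, r ω)) = (expLaw ΩS).prod (expLaw ΩR) := by
    rw [← hlaws, ← hlawr]
    exact (ProbabilityTheory.indepFun_iff_map_prod_eq_prod_map_map
      hs.aemeasurable hr.aemeasurable).mp hindep
  have hLHS : ∫ ω, (if ρ * s ω ≤ r ω then Real.logb 2 (1 + r ω) else 0) ∂P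
      = ∫ p, F p ∂((expLaw ΩS).prod (expLaw ΩR)) := by
    rw [← hmap, integral_map (hs.prodMk hr).aemeasurable hFmeas.aestronglyMeasurable]
  have hlogInt : Integrable (fun y => Real.logb 2 (1 + y)) (expLaw ΩR) := by
    rw [integrable_expLaw_iff hΩR, integrableOn_Ici_iff_integrableOn_Ioi]
    apply IntegrableOn.congr_fun
      ((integrableOn_log_mul_exp ha1).const_mul (ΩR⁻¹ / Real.log 2)) ?_ measurableSet_Ioi
    intro y _
    simp only [Real.logb]
    rw [show -y / ΩR = -(ΩR⁻¹ * y) by ring]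
    ring
  have hIndEq : ∀ y : ℝ, (fun x => F (x, y))
      = (Iic (y / ρ)).indicator (fun _ => Real.logb 2 (1 + y)) := by
    intro y; ext x
    simp only [hF, Set.indicator_apply, mem_Iic]
    by_cases hxy : ρ * x ≤ y
    · rw [if_pos hxy, if_pos ((le_div_iff₀' hρ).mpr hxy)]
    · rw [if_neg hxy, if_neg (fun hcon => hxy ((le_div_iff₀' hρ).mp hcon))]
  have hInt : Integrable F ((expLaw ΩS).prod (expLaw ΩR)) := by
    rw [integrable_prod_iff' hFmeas.aestronglyMeasurable]
    constructor
    · refine ae_of_all _ fun y => ?_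
      rw [hIndEq y]
      exact (integrable_const _).indicator measurableSet_Iic
    · apply hlogInt.norm.mono'
        ((hFmeas.norm.stronglyMeasurable.integral_prod_left').aestronglyMeasurable)
      refine ae_of_all _ fun y => ?_
      have hnormeq : (fun x => ‖F (x, y)‖)
          = (Iic (y / ρ)).indicator (fun _ => ‖Real.logb 2 (1 + y)‖) := by
        ext x
        rw [show ‖F (x, y)‖ = ‖(fun x => F (x, y)) x‖ from rfl, hIndEq y,
          norm_indicator_eq_indicator_norm]
      rw [Real.norm_of_nonneg (integral_nonneg fun x => norm_nonneg _), hnormeq,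
        integral_indicator_const _ measurableSet_Iic, smul_eq_mul, measureReal_def]
      have hle1 : ((expLaw ΩS) (Iic (y / ρ))).toReal ≤ 1 := by
        apply ENNReal.toReal_le_of_le_ofReal zero_le_one
        simpa using prob_le_one
      nlinarith [norm_nonneg (Real.logb 2 (1 + y)),
        ENNReal.toReal_nonneg (a := (expLaw ΩS) (Iic (y / ρ)))]
  rw [hLHS, MeasureTheory.integral_prod_symm F hInt]
  have hinner : ∀ y : ℝ, ∫ x, F (x, y) ∂(expLaw ΩS)
      = ((expLaw ΩS) (Iic (y / ρ))).toReal * Real.logb 2 (1 + y) := by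
    intro y
    rw [show (fun x => F (x, y)) = fun x => F (x, y) from rfl]
    rw [show ∫ x, F (x, y) ∂(expLaw ΩS) = ∫ x, (fun x => F (x, y)) x ∂(expLaw ΩS) from rfl,
      hIndEq y, integral_indicator_const _ measurableSet_Iic, smul_eq_mul, measureReal_def]
  simp_rw [hinner]
  have hcongr : ∫ y, ((expLaw ΩS) (Iic (y / ρ))).toReal * Real.logb 2 (1 + y) ∂(expLaw ΩR)
      = ∫ y, (1 - Real.exp (-(y / (ρ * ΩS)))) * Real.logb 2 (1 + y) ∂(expLaw ΩR) := by
    apply integral_congr_ae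
    filter_upwards [expLaw_ae_nonneg ΩR] with y hy
    have hy0 : (0:ℝ) ≤ y := hy
    rw [expLaw_Iic hΩS (div_nonneg hy0 hρ.le), div_div]
  rw [hcongr, integral_expLaw hΩR]
  have hpt : ∀ y : ℝ,
      (1 - Real.exp (-(y / (ρ * ΩS)))) * Real.logb 2 (1 + y) * ((1 / ΩR) * Real.exp (-y / ΩR))
      = (1 / (ΩR * Real.log 2)) * (Real.log (1 + y) * Real.exp (-(ΩR⁻¹ * y))
          - Real.log (1 + y) * Real.exp (-((ΩR⁻¹ + (ρ * ΩS)⁻¹) * y))) := by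
    intro y
    have h2 : Real.exp (-((ΩR⁻¹ + (ρ * ΩS)⁻¹) * y))
        = Real.exp (-(ΩR⁻¹ * y)) * Real.exp (-(y / (ρ * ΩS))) := by
      rw [← Real.exp_add]
      congr 1
      field_simp
      ring
    simp only [Real.logb]
    rw [show -y / ΩR = -(ΩR⁻¹ * y) by ring, h2]
    field_simp
  simp_rw [hpt]
  rw [MeasureTheory.integral_const_mul,
    MeasureTheory.integral_sub (integrableOn_log_mul_exp ha1) (integrableOn_log_mul_exp ha2),
    integral_log_mul_exp ha1, integral_log_mul_exp ha2,
    show ΩR⁻¹ + (ρ * ΩS)⁻¹ = (ΩR + ρ * ΩS) / (ρ * ΩS * ΩR) by field_simp; ring,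
    show ΩR⁻¹ = 1 / ΩR from (one_div _).symm]
  have hsum : (0:ℝ) < ΩR + ρ * ΩS := by positivity
  field_simp
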